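/- Let b > 0 and let α : [0,b] → ℝ be differentiable with 0 < α(t) < 1 on [0,b] and |α'(t)| ≤ L for all t ∈ [0,b]. Set k(t) = t^{−α(t)}, κ = Γ(α(0))·Γ(1−α(0)) and K(t) = t^{α(0)−1}/κ. Then K ∈ L¹(0,b), and the function g(t) = ∫₀ᵗ K(t−s) k(s) ds is differentiable on (0,b) with g' ∈ L¹(0,b) and g(0) = 1; that is, k satisfies the generalized Sonine condition with associated kernel K. -/

import Mathlib

open MeasureTheory Set Filter intervalIntegral
open scoped Topology


namespace Stmt0Aux

lemma beta_integrable {p q : ℝ} (hp : -1 < p) (hq : -1 < q) :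
    IntervalIntegrable (fun u : ℝ => u ^ p * (1 - u) ^ q) volume 0 1 := by
  have h1 : IntervalIntegrable (fun u : ℝ => u ^ p * (1 - u) ^ q) volume 0 (1/2) := by
    apply IntervalIntegrable.mul_continuousOn (intervalIntegrable_rpow' hp)
    apply ContinuousOn.rpow_const (by fun_prop)
    intro x hx
    rw [uIcc_of_le (by norm_num)] at hx
    left
    have := hx.2
    intro h
    nlinarith [sub_eq_zero.mp h]
  have h2 : IntervalIntegrable (fun u : ℝ => u ^ p * (1 - u) ^ q) volume (1/2) 1 := by
    have base : IntervalIntegrable (fun x : ℝ => x ^ q) volume 0 (1/2) :=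
      intervalIntegrable_rpow' hq
    have := base.comp_sub_left 1
    norm_num at this
    apply IntervalIntegrable.continuousOn_mul this.symm
    apply ContinuousOn.rpow_const (by fun_prop)
    intro x hx
    rw [uIcc_of_le (by norm_num)] at hx
    left
    have := hx.1
    intro h; rw [h] at this; norm_num at this
  exact h1.trans h2

lemma beta_value {c : ℝ} (hc0 : 0 < c) (hc1 : c < 1) :
    ∫ u in (0:ℝ)..1, u ^ (-c) * (1 - u) ^ (c - 1) = Real.Gamma (1 - c) * Real.Gamma c := by
  have h := Complex.Gamma_mul_Gamma_eq_betaIntegral (s := (1 - c : ℝ))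
      (t := (c : ℝ)) (by simp; linarith) (by simpa using hc0)
  have h1 : ((1 - c : ℝ) : ℂ) + ((c : ℝ) : ℂ) = 1 := by push_cast; ring
  rw [h1, Complex.Gamma_one, one_mul] at h
  have h2 : Complex.betaIntegral ((1 - c : ℝ) : ℂ) ((c : ℝ) : ℂ)
      = ((∫ u in (0:ℝ)..1, u ^ (-c) * (1 - u) ^ (c - 1) : ℝ) : ℂ) := by
    rw [Complex.betaIntegral, ← intervalIntegral.integral_ofReal]
    apply intervalIntegral.integral_congr
    intro x hx
    rw [uIcc_of_le (by norm_num)] at hx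
    push_cast
    rw [Complex.ofReal_cpow hx.1, Complex.ofReal_cpow (by linarith [hx.2])]
    push_cast
    ring_nf
  rw [h2] at h
  rw [Complex.Gamma_ofReal, Complex.Gamma_ofReal, ← Complex.ofReal_mul] at h
  exact_mod_cast h.symm

end Stmt0Aux

lemma abs_log_le_rpow {u : ℝ} (hu0 : 0 < u) (hu1 : u ≤ 1) :
    |Real.log u| ≤ 2 * u ^ (-(1/2) : ℝ) := by
  have h1 : |Real.log u| = Real.log u⁻¹ := by
    rw [Real.log_inv, abs_of_nonpos (Real.log_nonpos hu0.le hu1)]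
  have h2 := Real.log_le_rpow_div (inv_nonneg.mpr hu0.le) (one_half_pos)
  rw [h1]
  refine h2.trans (le_of_eq ?_)
  rw [Real.inv_rpow hu0.le, ← Real.rpow_neg hu0.le]
  norm_num
  ring

lemma abs_log_le_of_le {t b : ℝ} (h0 : 0 < t) (htb : t ≤ b) :
    |Real.log t| ≤ 2 * t ^ (-(1/2) : ℝ) + |Real.log b| := by
  rcases le_or_gt t 1 with h | h
  · have := abs_log_le_rpow h0 h
    have h2 : (0:ℝ) ≤ |Real.log b| := abs_nonneg _
    linarith
  · have h1 : |Real.log t| = Real.log t := abs_of_pos (Real.log_pos h)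
    have h2 : Real.log t ≤ Real.log b := Real.log_le_log h0 htb
    have h3 : Real.log b ≤ |Real.log b| := le_abs_self _
    have h4 : (0:ℝ) ≤ 2 * t ^ (-(1/2) : ℝ) := by positivity
    linarith

lemma mul_abs_log_le {s b : ℝ} (h0 : 0 < s) (hsb : s ≤ b) :
    s * |Real.log s| ≤ 1 + b * |Real.log b| := by
  have hb0 : 0 < b := lt_of_lt_of_le h0 hsb
  have hbl : 0 ≤ b * |Real.log b| := by positivity
  rcases le_or_gt s 1 with h | h
  · have h1 := Real.abs_log_mul_self_lt s h0 h
    have h2 : |Real.log s * s| = |Real.log s| * s := by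
      rw [abs_mul, abs_of_pos h0]
    nlinarith [abs_nonneg (Real.log s)]
  · have h1 : |Real.log s| = Real.log s := abs_of_pos (Real.log_pos h)
    have h2 : |Real.log b| = Real.log b := abs_of_pos (Real.log_pos (lt_of_lt_of_le h hsb))
    rw [h1, h2]
    have h3 : Real.log s ≤ Real.log b := Real.log_le_log h0 hsb
    nlinarith [Real.log_nonneg h.le]


set_option maxHeartbeats 2000000 in
theorem stmt0 (b L : ℝ) (hb : 0 < b) (α α' : ℝ → ℝ)
    (hα_diff : ∀ t ∈ Icc (0:ℝ) b, HasDerivAt α (α' t) t)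
    (hα_range : ∀ t ∈ Icc (0:ℝ) b, 0 < α t ∧ α t < 1)
    (hα_lip : ∀ t ∈ Icc (0:ℝ) b, |α' t| ≤ L)
    (k K g : ℝ → ℝ)
    (hk : ∀ t : ℝ, k t = t ^ (-(α t)))
    (hK : ∀ t : ℝ, K t = t ^ (α 0 - 1) / (Real.Gamma (α 0) * Real.Gamma (1 - α 0)))
    (hg : ∀ t : ℝ, g t = ∫ s in (0:ℝ)..t, K (t - s) * k s) :
    IntegrableOn K (Ioo 0 b) ∧
    (∀ t ∈ Ioo (0:ℝ) b, DifferentiableAt ℝ g t) ∧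
    IntegrableOn (deriv g) (Ioo 0 b) ∧
    Tendsto g (nhdsWithin 0 (Ioi 0)) (nhds 1) := by
  have h0mem : (0:ℝ) ∈ Icc (0:ℝ) b := ⟨le_refl 0, hb.le⟩
  obtain ⟨hc0, hc1⟩ := hα_range 0 h0mem
  set c := α 0 with hcdef
  have hL : 0 ≤ L := (abs_nonneg _).trans (hα_lip 0 h0mem)
  set κ := Real.Gamma c * Real.Gamma (1 - c) with hκdef
  have hκ : 0 < κ := mul_pos (Real.Gamma_pos_of_pos hc0)
    (Real.Gamma_pos_of_pos (by linarith))
  set φ : ℝ → ℝ := fun s => Real.exp ((c - α s) * Real.log s) with hφdef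
  set D : ℝ → ℝ := fun s => φ s * ((c - α s) / s - deriv α s * Real.log s) with hDdef
  -- Lipschitz bound on α
  have habs : ∀ s ∈ Icc (0:ℝ) b, |α s - c| ≤ L * s := by
    intro s hs
    have := Convex.norm_image_sub_le_of_norm_hasDerivWithin_le
      (f := α) (f' := α') (C := L) (s := Icc (0:ℝ) b)
      (fun x hx => (hα_diff x hx).hasDerivWithinAt)
      (fun x hx => by simpa [Real.norm_eq_abs] using hα_lip x hx)
      (convex_Icc 0 b) h0mem hs
    rw [Real.norm_eq_abs, Real.norm_eq_abs, sub_zero, abs_of_nonneg hs.1] at this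
    exact this
  set S := 1 + b * |Real.log b| with hSdef
  have hSexp : ∀ s : ℝ, 0 < s → s ≤ b → |(c - α s) * Real.log s| ≤ L * S := by
    intro s hs hsb
    rw [abs_mul]
    have h1 : |c - α s| ≤ L * s := by
      rw [abs_sub_comm]; exact habs s ⟨hs.le, hsb⟩
    have h2 := mul_abs_log_le hs hsb
    have h3 : |c - α s| * |Real.log s| ≤ (L * s) * |Real.log s| :=
      mul_le_mul_of_nonneg_right h1 (abs_nonneg _)
    have h4 : (L * s) * |Real.log s| = L * (s * |Real.log s|) := by ring
    rw [hSdef]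
    nlinarith [abs_nonneg (Real.log s)]
  set E := Real.exp (L * S) with hEdef
  have hE0 : 0 < E := Real.exp_pos _
  have hφ_le : ∀ s : ℝ, 0 < s → s ≤ b → φ s ≤ E := by
    intro s hs hsb
    exact Real.exp_le_exp.mpr ((le_abs_self _).trans (hSexp s hs hsb))
  -- derivative of φ
  have hφ_deriv : ∀ s : ℝ, 0 < s → s ≤ b → HasDerivAt φ (D s) s := by
    intro s hs hsb
    have hαd := hα_diff s ⟨hs.le, hsb⟩
    have hinner : HasDerivAt (fun s => (c - α s) * Real.log s)
        ((0 - α' s) * Real.log s + (c - α s) * s⁻¹) s :=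
      ((hasDerivAt_const s c).sub hαd).mul (Real.hasDerivAt_log hs.ne')
    have h2 := hinner.exp
    convert h2 using 1
    rw [hDdef]
    simp only [hφdef, hαd.deriv]
    field_simp
    ring
  have hD_bound : ∀ s : ℝ, 0 < s → s ≤ b → |D s| ≤ E * L * (1 + |Real.log s|) := by
    intro s hs hsb
    have hαd := hα_diff s ⟨hs.le, hsb⟩
    have h1 : |(c - α s)/s| ≤ L := by
      rw [abs_div, abs_of_pos hs, div_le_iff₀ hs, abs_sub_comm]
      exact habs s ⟨hs.le, hsb⟩
    have h2 : |deriv α s * Real.log s| ≤ L * |Real.log s| := by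
      rw [abs_mul, hαd.deriv]
      exact mul_le_mul_of_nonneg_right (hα_lip s ⟨hs.le, hsb⟩) (abs_nonneg _)
    have h3 : (0:ℝ) < φ s := Real.exp_pos _
    have h4 : φ s ≤ E := hφ_le s hs hsb
    have h5 : |(c - α s)/s - deriv α s * Real.log s| ≤ L + L * |Real.log s| := by
      refine (abs_sub _ _).trans (add_le_add h1 h2)
    rw [hDdef]
    simp only
    rw [abs_mul, abs_of_pos h3]
    calc φ s * |(c - α s)/s - deriv α s * Real.log s|
        ≤ E * (L + L * |Real.log s|) := by
          apply mul_le_mul h4 h5 (abs_nonneg _) hE0.le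
      _ = E * L * (1 + |Real.log s|) := by ring
  -- substitution identity
  have key : ∀ t : ℝ, 0 < t →
      g t = (∫ u in (0:ℝ)..1, u ^ (-c) * (1-u) ^ (c-1) * φ (t*u)) / κ := by
    intro t ht
    have hsub := intervalIntegral.integral_comp_mul_left (a := (0:ℝ)) (b := 1)
      (f := fun s => K (t - s) * k s) (c := t) ht.ne'
    rw [mul_zero, mul_one] at hsub
    have hg' : g t = t * ∫ x in (0:ℝ)..1, K (t - t*x) * k (t*x) := by
      rw [hg t, hsub, smul_eq_mul, ← mul_assoc, mul_inv_cancel₀ ht.ne', one_mul]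
    rw [hg', ← intervalIntegral.integral_const_mul, ← intervalIntegral.integral_div]
    apply intervalIntegral.integral_congr
    intro u hu
    show t * (K (t - t*u) * k (t*u)) = u ^ (-c) * (1-u) ^ (c-1) * φ (t*u) / κ
    rw [uIcc_of_le (by norm_num)] at hu
    rcases eq_or_lt_of_le hu.1 with h0 | h0
    · rw [← h0]
      rw [hk, hK]
      rw [mul_zero]
      rw [Real.zero_rpow (show -c ≠ 0 from neg_ne_zero.mpr hc0.ne')]
      ring
    rcases eq_or_lt_of_le hu.2 with h1 | h1
    · rw [h1]
      rw [hk, hK]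
      rw [mul_one, sub_self, sub_self, Real.zero_rpow (show c - 1 ≠ 0 by
        intro h; rw [sub_eq_zero] at h; linarith)]
      ring
    have hu0 : 0 < u := h0
    have hu1 : u < 1 := h1
    have htu : 0 < t * u := mul_pos ht hu0
    have h1u : 0 < 1 - u := by linarith
    rw [hK, hk]
    rw [show t - t*u = t*(1-u) by ring, Real.mul_rpow ht.le h1u.le]
    rw [show -α (t*u) = -c + (c - α (t*u)) by ring, Real.rpow_add htu,
      Real.mul_rpow ht.le hu0.le]
    have e3 : (t*u) ^ (c - α (t*u)) = φ (t*u) := by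
      rw [Real.rpow_def_of_pos htu, hφdef]
      simp only
      ring_nf
    rw [e3]
    have e4 : t * (t ^ (c-1) * t ^ (-c)) = 1 := by
      rw [← Real.rpow_add ht, show c - 1 + -c = -1 by ring, Real.rpow_neg_one]
      exact mul_inv_cancel₀ ht.ne'
    have e5 : t * (t ^ (c-1) * (1-u) ^ (c-1) / κ * (t ^ (-c) * u ^ (-c) * φ (t*u)))
        = (t * (t ^ (c-1) * t ^ (-c))) * (u ^ (-c) * (1-u) ^ (c-1) * φ (t*u)) / κ := by
      ring
    rw [e5, e4, one_mul]
  -- continuity helpers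
  have hψcont : ContinuousOn (fun u : ℝ => u ^ (-c) * (1-u) ^ (c-1)) (Ioo 0 1) := by
    apply ContinuousOn.mul
    · apply ContinuousOn.rpow_const continuousOn_id
      intro x hx; exact Or.inl hx.1.ne'
    · apply ContinuousOn.rpow_const (by fun_prop)
      intro x hx; exact Or.inl (sub_ne_zero.mpr hx.2.ne')
  have hmemIcc : ∀ x : ℝ, 0 < x → x ≤ b → ∀ u ∈ Ioo (0:ℝ) 1,
      0 < x*u ∧ x*u ≤ b := by
    intro x hx hxb u hu
    constructor
    · exact mul_pos hx hu.1
    · nlinarith [hu.2]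
  have hφcont : ∀ x : ℝ, 0 < x → x ≤ b → ContinuousOn (fun u : ℝ => φ (x*u)) (Ioo 0 1) := by
    intro x hx hxb u hu
    obtain ⟨htu, htub⟩ := hmemIcc x hx hxb u hu
    apply ContinuousAt.continuousWithinAt
    have hα_cont : ContinuousAt α (x*u) := (hα_diff _ ⟨htu.le, htub⟩).continuousAt
    have hmul : ContinuousAt (fun u : ℝ => x*u) u :=
      (continuous_const.mul continuous_id).continuousAt
    have h1 : ContinuousAt (fun u : ℝ => (c - α (x*u)) * Real.log (x*u)) u := by
      apply ContinuousAt.mul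
      · exact continuousAt_const.sub (hα_cont.comp hmul)
      · exact (Real.continuousAt_log htu.ne').comp hmul
    exact Real.continuous_exp.continuousAt.comp h1
  -- measurability of the integrand
  have hmeasF : ∀ x : ℝ, 0 < x → x ≤ b →
      AEStronglyMeasurable (fun u => u ^ (-c) * (1-u) ^ (c-1) * φ (x*u))
        (volume.restrict (Set.uIoc (0:ℝ) 1)) := by
    intro x hx hxb
    rw [uIoc_of_le (zero_le_one), ← Measure.restrict_congr_set Ioo_ae_eq_Ioc]
    exact (hψcont.mul (hφcont x hx hxb)).aestronglyMeasurable measurableSet_Ioo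
  have hψint : IntervalIntegrable (fun u : ℝ => u ^ (-c) * (1-u) ^ (c-1)) volume 0 1 :=
    Stmt0Aux.beta_integrable (by linarith) (by linarith)
  have hFint : ∀ x : ℝ, 0 < x → x ≤ b →
      IntervalIntegrable (fun u => u ^ (-c) * (1-u) ^ (c-1) * φ (x*u)) volume 0 1 := by
    intro x hx hxb
    refine IntervalIntegrable.mono_fun' (hψint.const_mul E) (hmeasF x hx hxb) ?_
    rw [uIoc_of_le zero_le_one]
    filter_upwards [ae_restrict_mem measurableSet_Ioc] with u hu
    have hu0 := hu.1
    have hψnn : 0 ≤ u ^ (-c) * (1-u) ^ (c-1) :=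
      mul_nonneg (Real.rpow_nonneg hu0.le _) (Real.rpow_nonneg (by linarith [hu.2]) _)
    have hφE : φ (x*u) ≤ E := hφ_le _ (mul_pos hx hu0) (by nlinarith [hu.2])
    rw [Real.norm_eq_abs, abs_mul, abs_of_nonneg hψnn,
      abs_of_pos (show (0:ℝ) < φ (x*u) from Real.exp_pos _)]
    calc u ^ (-c) * (1-u) ^ (c-1) * φ (x*u) ≤ u ^ (-c) * (1-u) ^ (c-1) * E :=
          mul_le_mul_of_nonneg_left hφE hψnn
      _ = E * (u ^ (-c) * (1-u) ^ (c-1)) := mul_comm _ _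
  have hβ₁ : IntervalIntegrable (fun u : ℝ => u ^ (1-c) * (1-u) ^ (c-1)) volume 0 1 :=
    Stmt0Aux.beta_integrable (by linarith) (by linarith)
  have hβ₂ : IntervalIntegrable (fun u : ℝ => u ^ (1/2-c) * (1-u) ^ (c-1)) volume 0 1 :=
    Stmt0Aux.beta_integrable (by linarith) (by linarith)
  have hmeasF' : ∀ t : ℝ, 0 < t → t ≤ b →
      AEStronglyMeasurable (fun u => u ^ (-c) * (1-u) ^ (c-1) * (u * D (t*u)))
        (volume.restrict (Set.uIoc (0:ℝ) 1)) := by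
    intro t ht htb
    rw [uIoc_of_le (zero_le_one), ← Measure.restrict_congr_set Ioo_ae_eq_Ioc]
    have hψm : AEStronglyMeasurable (fun u : ℝ => u ^ (-c) * (1-u) ^ (c-1))
        (volume.restrict (Ioo (0:ℝ) 1)) := hψcont.aestronglyMeasurable measurableSet_Ioo
    have hDm : AEStronglyMeasurable (fun u : ℝ => D (t*u)) (volume.restrict (Ioo (0:ℝ) 1)) := by
      have hφm : AEStronglyMeasurable (fun u : ℝ => φ (t*u))
          (volume.restrict (Ioo (0:ℝ) 1)) :=
        (hφcont t ht htb).aestronglyMeasurable measurableSet_Ioo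
      have hqm : ContinuousOn (fun u : ℝ => (c - α (t*u)) / (t*u)) (Ioo 0 1) := by
        intro u hu
        obtain ⟨htu, htub⟩ := hmemIcc t ht htb u hu
        apply ContinuousAt.continuousWithinAt
        have hmul : ContinuousAt (fun u : ℝ => t*u) u :=
          (continuous_const.mul continuous_id).continuousAt
        exact (continuousAt_const.sub
          (((hα_diff _ ⟨htu.le, htub⟩).continuousAt).comp hmul)).div hmul htu.ne'
      have hlogm : ContinuousOn (fun u : ℝ => Real.log (t*u)) (Ioo 0 1) := by
        intro u hu
        obtain ⟨htu, _⟩ := hmemIcc t ht htb u hu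
        exact ((Real.continuousAt_log htu.ne').comp
          ((continuous_const.mul continuous_id).continuousAt)).continuousWithinAt
      have hdm : AEStronglyMeasurable (fun u : ℝ => deriv α (t*u) * Real.log (t*u))
          (volume.restrict (Ioo (0:ℝ) 1)) :=
        (((measurable_deriv α).comp (measurable_const_mul t)).aestronglyMeasurable).mul
          (hlogm.aestronglyMeasurable measurableSet_Ioo)
      simp only [hDdef]
      exact hφm.mul ((hqm.aestronglyMeasurable measurableSet_Ioo).sub hdm)
    exact hψm.mul (aestronglyMeasurable_id.mul hDm)
  -- pointwise bound on the differentiated integrand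
  have hF'le : ∀ x : ℝ, 0 < x → x ≤ b → ∀ u ∈ Ioc (0:ℝ) 1,
      ‖u ^ (-c) * (1-u) ^ (c-1) * (u * D (x*u))‖ ≤
        (E*L*(1+|Real.log x|)) * (u ^ (1-c) * (1-u) ^ (c-1))
          + (2*E*L) * (u ^ (1/2-c) * (1-u) ^ (c-1)) := by
    intro x hx hxb u hu
    rcases eq_or_lt_of_le hu.2 with h1 | h1
    · rw [h1]
      simp [sub_self, Real.zero_rpow
        (show c-1 ≠ 0 from by intro h; rw [sub_eq_zero] at h; linarith)]
    have hu0 := hu.1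
    obtain ⟨htu, htub⟩ := hmemIcc x hx hxb u ⟨hu0, h1⟩
    have hDb := hD_bound _ htu htub
    have hEL : (0:ℝ) ≤ E*L := mul_nonneg hE0.le hL
    have hlog : |Real.log (x*u)| ≤ |Real.log x| + |Real.log u| := by
      rw [Real.log_mul hx.ne' hu0.ne']; exact abs_add_le _ _
    have hlogu : |Real.log u| ≤ 2 * u ^ (-(1/2):ℝ) := abs_log_le_rpow hu0 hu.2
    have hψnn : (0:ℝ) ≤ u ^ (-c) * (1-u) ^ (c-1) :=
      mul_nonneg (Real.rpow_nonneg hu0.le _) (Real.rpow_nonneg (by linarith [h1]) _)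
    have hchain : |D (x*u)| ≤ E*L*(1 + |Real.log x| + |Real.log u|) := by
      refine hDb.trans ?_
      nlinarith [hEL, hlog]
    have e1 : u ^ (-c) * (1-u) ^ (c-1) * u = u ^ (1-c) * (1-u) ^ (c-1) := by
      rw [show (1:ℝ)-c = -c + 1 by ring, Real.rpow_add hu0, Real.rpow_one]; ring
    have h3 : u ^ (1-c) * u ^ (-(1/2):ℝ) = u ^ (1/2-c) := by
      rw [← Real.rpow_add hu0, show (1:ℝ)-c + -(1/2) = 1/2 - c by ring]
    have e2 : u ^ (1-c) * (1-u) ^ (c-1) * |Real.log u| ≤ 2 * (u ^ (1/2-c) * (1-u) ^ (c-1)) := by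
      have h2 : u ^ (1-c) * |Real.log u| ≤ u ^ (1-c) * (2 * u ^ (-(1/2):ℝ)) :=
        mul_le_mul_of_nonneg_left hlogu (Real.rpow_nonneg hu0.le _)
      calc u ^ (1-c) * (1-u) ^ (c-1) * |Real.log u|
          = (u ^ (1-c) * |Real.log u|) * (1-u) ^ (c-1) := by ring
        _ ≤ (u ^ (1-c) * (2 * u ^ (-(1/2):ℝ))) * (1-u) ^ (c-1) :=
            mul_le_mul_of_nonneg_right h2 (Real.rpow_nonneg (by linarith [h1]) _)
        _ = 2 * ((u ^ (1-c) * u ^ (-(1/2):ℝ)) * (1-u) ^ (c-1)) := by ring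
        _ = 2 * (u ^ (1/2-c) * (1-u) ^ (c-1)) := by rw [h3]
    rw [Real.norm_eq_abs, abs_mul, abs_of_nonneg hψnn, abs_mul, abs_of_pos hu0]
    calc u ^ (-c) * (1-u) ^ (c-1) * (u * |D (x*u)|)
        ≤ u ^ (-c) * (1-u) ^ (c-1) * (u * (E*L*(1 + |Real.log x| + |Real.log u|))) := by
          exact mul_le_mul_of_nonneg_left
            (mul_le_mul_of_nonneg_left hchain hu0.le) hψnn
      _ = (E*L*(1+|Real.log x|)) * (u ^ (-c) * (1-u) ^ (c-1) * u)
            + (E*L) * (u ^ (-c) * (1-u) ^ (c-1) * u * |Real.log u|) := by ring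
      _ = (E*L*(1+|Real.log x|)) * (u ^ (1-c) * (1-u) ^ (c-1))
            + (E*L) * (u ^ (1-c) * (1-u) ^ (c-1) * |Real.log u|) := by rw [e1]
      _ ≤ (E*L*(1+|Real.log x|)) * (u ^ (1-c) * (1-u) ^ (c-1))
            + (E*L) * (2 * (u ^ (1/2-c) * (1-u) ^ (c-1))) := by
          exact add_le_add_right (mul_le_mul_of_nonneg_left e2 hEL) _
      _ = (E*L*(1+|Real.log x|)) * (u ^ (1-c) * (1-u) ^ (c-1))
            + (2*E*L) * (u ^ (1/2-c) * (1-u) ^ (c-1)) := by ring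
  -- derivative of the parametric integral
  have hFderiv : ∀ t ∈ Ioo (0:ℝ) b,
      HasDerivAt (fun x => ∫ u in (0:ℝ)..1, u ^ (-c) * (1-u) ^ (c-1) * φ (x*u))
        (∫ u in (0:ℝ)..1, u ^ (-c) * (1-u) ^ (c-1) * (u * D (t*u))) t := by
    intro t ht
    obtain ⟨ht0, htb⟩ := ht
    set ε := min t (b - t) / 2 with hεdef
    have hε : 0 < ε := div_pos (lt_min ht0 (by linarith)) two_pos
    have hε2 : ε ≤ t/2 := by
      have := min_le_left t (b-t); linarith
    have hε3 : ε ≤ (b-t)/2 := by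
      have := min_le_right t (b-t); linarith
    have htε : 0 < t - ε := by linarith
    have hball : ∀ x ∈ Metric.ball t ε, t - ε < x ∧ x < t + ε ∧ 0 < x ∧ x < b := by
      intro x hx
      rw [Metric.mem_ball, Real.dist_eq, abs_lt] at hx
      refine ⟨by linarith [hx.1], by linarith [hx.2], by linarith [hx.1], by linarith [hx.2]⟩
    set Ct := max |Real.log (t - ε)| |Real.log (t + ε)| with hCtdef
    have hlogx : ∀ x ∈ Metric.ball t ε, |Real.log x| ≤ Ct := by
      intro x hx
      obtain ⟨h1, h2, h3, _⟩ := hball x hx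
      refine abs_le.mpr ⟨?_, ?_⟩
      · have := Real.log_le_log htε h1.le
        have := neg_abs_le (Real.log (t - ε))
        have := le_max_left |Real.log (t - ε)| |Real.log (t + ε)|
        linarith
      · have := Real.log_le_log h3 h2.le
        have := le_abs_self (Real.log (t + ε))
        have := le_max_right |Real.log (t - ε)| |Real.log (t + ε)|
        linarith
    have hres := intervalIntegral.hasDerivAt_integral_of_dominated_loc_of_deriv_le
      (F := fun x u => u ^ (-c) * (1-u) ^ (c-1) * φ (x*u))
      (F' := fun x u => u ^ (-c) * (1-u) ^ (c-1) * (u * D (x*u)))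
      (x₀ := t) (a := (0:ℝ)) (b := (1:ℝ)) (μ := volume)
      (bound := fun u => (E*L*(1+Ct)) * (u ^ (1-c) * (1-u) ^ (c-1))
        + (2*E*L) * (u ^ (1/2-c) * (1-u) ^ (c-1)))
      (Metric.ball_mem_nhds t hε) ?_ (hFint t ht0 htb.le) (hmeasF' t ht0 htb.le) ?_ ?_ ?_
    · exact hres.2
    · filter_upwards [Ioo_mem_nhds ht0 htb] with x hx
      exact hmeasF x hx.1 hx.2.le
    · apply ae_of_all
      intro u hu x hx
      rw [uIoc_of_le zero_le_one] at hu
      obtain ⟨_, _, hx0, hxb⟩ := hball x hx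
      refine (hF'le x hx0 hxb.le u hu).trans ?_
      have h1 : |Real.log x| ≤ Ct := hlogx x hx
      have hβnn : (0:ℝ) ≤ u ^ (1-c) * (1-u) ^ (c-1) :=
        mul_nonneg (Real.rpow_nonneg hu.1.le _) (Real.rpow_nonneg (by linarith [hu.2]) _)
      have hEL : (0:ℝ) ≤ E*L := mul_nonneg hE0.le hL
      have h2 : E*L*(1+|Real.log x|) ≤ E*L*(1+Ct) := by nlinarith
      have h3 := mul_le_mul_of_nonneg_right h2 hβnn
      linarith
    · exact (hβ₁.const_mul _).add (hβ₂.const_mul _)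
    · apply ae_of_all
      intro u hu x hx
      rw [uIoc_of_le zero_le_one] at hu
      obtain ⟨_, _, hx0, hxb⟩ := hball x hx
      rcases eq_or_lt_of_le hu.2 with h1 | h1
      · subst h1
        have hz : ((1:ℝ)-1) ^ (c-1) = 0 := by
          rw [sub_self, Real.zero_rpow
            (show c-1 ≠ 0 from by intro h; rw [sub_eq_zero] at h; linarith)]
        simp only [hz, mul_zero, zero_mul]
        exact hasDerivAt_const x 0
      · obtain ⟨htu, htub⟩ := hmemIcc x hx0 hxb.le u ⟨hu.1, h1⟩
        have h2 := ((hφ_deriv _ htu htub).comp x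
          ((hasDerivAt_id x).mul_const u)).const_mul (u ^ (-c) * (1-u) ^ (c-1))
        convert h2 using 1
        · rfl
        · rfl
        ring
  have hgderiv : ∀ t ∈ Ioo (0:ℝ) b,
      HasDerivAt g ((∫ u in (0:ℝ)..1, u ^ (-c) * (1-u) ^ (c-1) * (u * D (t*u))) / κ) t := by
    intro t ht
    have h1 := (hFderiv t ht).div_const κ
    refine h1.congr_of_eventuallyEq ?_
    filter_upwards [Ioi_mem_nhds ht.1] with x hx
    exact key x hx
  refine ⟨?_, ?_, ?_, ?_⟩
  · -- integrability of K
    have h1 : IntervalIntegrable (fun t : ℝ => t ^ (c-1) / κ) volume 0 b :=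
      (intervalIntegrable_rpow' (by linarith)).div_const κ
    have h2 : IntegrableOn (fun t : ℝ => t ^ (c-1) / κ) (Ioc 0 b) volume :=
      (intervalIntegrable_iff_integrableOn_Ioc_of_le hb.le).mp h1
    have h3 : K = fun t : ℝ => t ^ (c-1) / κ := funext hK
    rw [h3]
    exact h2.mono_set Ioo_subset_Ioc_self
  · intro t ht
    exact (hgderiv t ht).differentiableAt
  · -- integrability of deriv g
    set J₁ := ∫ u in (0:ℝ)..1, u ^ (1-c) * (1-u) ^ (c-1) with hJ₁def
    set J₂ := ∫ u in (0:ℝ)..1, u ^ (1/2-c) * (1-u) ^ (c-1) with hJ₂def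
    have hEL : (0:ℝ) ≤ E*L := mul_nonneg hE0.le hL
    have hJ₁nn : 0 ≤ J₁ := intervalIntegral.integral_nonneg zero_le_one
      (fun u hu => mul_nonneg (Real.rpow_nonneg hu.1 _)
        (Real.rpow_nonneg (by linarith [hu.2]) _))
    have hJ₂nn : 0 ≤ J₂ := intervalIntegral.integral_nonneg zero_le_one
      (fun u hu => mul_nonneg (Real.rpow_nonneg hu.1 _)
        (Real.rpow_nonneg (by linarith [hu.2]) _))
    set A := ((E*L*(1+|Real.log b|)) * J₁ + (2*E*L) * J₂)/κ with hAdef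
    set B := (E*L*2*J₁)/κ with hBdef
    have hbd : ∀ t ∈ Ioo (0:ℝ) b, ‖deriv g t‖ ≤ A + B * t ^ (-(1/2):ℝ) := by
      intro t ht
      rw [(hgderiv t ht).deriv, Real.norm_eq_abs, abs_div, abs_of_pos hκ]
      have hnorm := intervalIntegral.norm_integral_le_abs_of_norm_le
        (μ := volume) (a := (0:ℝ)) (b := (1:ℝ))
        (f := fun u => u ^ (-c) * (1-u) ^ (c-1) * (u * D (t*u)))
        (g := fun u => (E*L*(1+|Real.log t|)) * (u ^ (1-c) * (1-u) ^ (c-1))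
          + (2*E*L) * (u ^ (1/2-c) * (1-u) ^ (c-1)))
        (by
          rw [uIoc_of_le zero_le_one]
          filter_upwards [ae_restrict_mem measurableSet_Ioc] with u hu
          exact hF'le t ht.1 ht.2.le u hu)
        ((hβ₁.const_mul _).add (hβ₂.const_mul _))
      have hval : (∫ u in (0:ℝ)..1, ((E*L*(1+|Real.log t|)) * (u ^ (1-c) * (1-u) ^ (c-1))
          + (2*E*L) * (u ^ (1/2-c) * (1-u) ^ (c-1))))
          = (E*L*(1+|Real.log t|)) * J₁ + (2*E*L) * J₂ := by
        rw [intervalIntegral.integral_add (hβ₁.const_mul _) (hβ₂.const_mul _),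
          intervalIntegral.integral_const_mul, intervalIntegral.integral_const_mul]
      rw [hval] at hnorm
      have habsnn : (0:ℝ) ≤ (E*L*(1+|Real.log t|)) * J₁ + (2*E*L) * J₂ := by
        have h1 : (0:ℝ) ≤ 1 + |Real.log t| := by positivity
        have h2 := mul_nonneg (mul_nonneg hEL h1) hJ₁nn
        have h3 : (0:ℝ) ≤ 2*E*L := mul_nonneg (mul_nonneg two_pos.le hE0.le) hL
        have h4 := mul_nonneg h3 hJ₂nn
        linarith
      rw [abs_of_nonneg habsnn] at hnorm
      rw [Real.norm_eq_abs] at hnorm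
      have hlogt : |Real.log t| ≤ 2 * t ^ (-(1/2):ℝ) + |Real.log b| :=
        abs_log_le_of_le ht.1 ht.2.le
      have hnum : (E*L*(1+|Real.log t|)) * J₁ + (2*E*L) * J₂
          ≤ (E*L*(1+|Real.log b|)) * J₁ + (2*E*L) * J₂ + (E*L*2*J₁) * t ^ (-(1/2):ℝ) := by
        have k1 := mul_le_mul_of_nonneg_left hlogt (mul_nonneg hEL hJ₁nn)
        ring_nf at k1 ⊢
        linarith [k1]
      have hfinal : |∫ u in (0:ℝ)..1, u ^ (-c) * (1-u) ^ (c-1) * (u * D (t*u))| / κ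
          ≤ ((E*L*(1+|Real.log b|)) * J₁ + (2*E*L) * J₂ + (E*L*2*J₁) * t ^ (-(1/2):ℝ))/κ := by
        exact (div_le_div_iff_of_pos_right hκ).mpr (hnorm.trans hnum)
      refine hfinal.trans (le_of_eq ?_)
      rw [hAdef, hBdef]
      ring
    have hdomint : IntegrableOn (fun t : ℝ => A + B * t ^ (-(1/2):ℝ)) (Ioo 0 b) volume := by
      have h1 : IntervalIntegrable (fun t : ℝ => A + B * t ^ (-(1/2):ℝ)) volume 0 b :=
        (_root_.intervalIntegrable_const).add ((intervalIntegrable_rpow' (by norm_num)).const_mul B)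
      exact ((intervalIntegrable_iff_integrableOn_Ioc_of_le hb.le).mp h1).mono_set
        Ioo_subset_Ioc_self
    apply hdomint.mono' ((measurable_deriv g).aestronglyMeasurable)
    filter_upwards [ae_restrict_mem measurableSet_Ioo] with t ht
    exact hbd t ht
  · -- limit of g at 0+
    have hIoo : Ioo (0:ℝ) b ∈ 𝓝[>] (0:ℝ) := Ioo_mem_nhdsGT_of_mem ⟨le_refl 0, hb⟩
    have hlim : Tendsto (fun t => ∫ u in (0:ℝ)..1, u ^ (-c) * (1-u) ^ (c-1) * φ (t*u))
        (𝓝[>] 0) (𝓝 (∫ u in (0:ℝ)..1, u ^ (-c) * (1-u) ^ (c-1))) := by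
      apply intervalIntegral.tendsto_integral_filter_of_dominated_convergence
        (bound := fun u => E * (u ^ (-c) * (1-u) ^ (c-1)))
      · filter_upwards [hIoo] with t ht
        exact hmeasF t ht.1 ht.2.le
      · filter_upwards [hIoo] with t ht
        apply ae_of_all
        intro u hu
        rw [uIoc_of_le zero_le_one] at hu
        have hψnn : (0:ℝ) ≤ u ^ (-c) * (1-u) ^ (c-1) :=
          mul_nonneg (Real.rpow_nonneg hu.1.le _) (Real.rpow_nonneg (by linarith [hu.2]) _)
        have hφE : φ (t*u) ≤ E := hφ_le _ (mul_pos ht.1 hu.1)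
          (by nlinarith [hu.2, ht.2, hu.1])
        rw [Real.norm_eq_abs, abs_mul, abs_of_nonneg hψnn,
          abs_of_pos (show (0:ℝ) < φ (t*u) from Real.exp_pos _)]
        calc u ^ (-c) * (1-u) ^ (c-1) * φ (t*u) ≤ u ^ (-c) * (1-u) ^ (c-1) * E :=
              mul_le_mul_of_nonneg_left hφE hψnn
          _ = E * (u ^ (-c) * (1-u) ^ (c-1)) := mul_comm _ _
      · exact hψint.const_mul E
      · apply ae_of_all
        intro u hu
        rw [uIoc_of_le zero_le_one] at hu
        rcases eq_or_lt_of_le hu.2 with h1 | h1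
        · subst h1
          have hz : ((1:ℝ)-1) ^ (c-1) = 0 := by
            rw [sub_self, Real.zero_rpow
              (show c-1 ≠ 0 from by intro h; rw [sub_eq_zero] at h; linarith)]
          simp only [hz, mul_zero, zero_mul]
          exact tendsto_const_nhds
        · have hu0 := hu.1
          have htu : Tendsto (fun t : ℝ => t*u) (𝓝[>] 0) (𝓝[>] 0) := by
            have h1 : Tendsto (fun t : ℝ => t*u) (𝓝[>] (0:ℝ)) (𝓝 0) := by
              have h2 : Tendsto (fun t : ℝ => t*u) (𝓝 (0:ℝ)) (𝓝 (0*u)) :=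
                (continuous_id.mul continuous_const).tendsto 0
              rw [zero_mul] at h2
              exact h2.mono_left nhdsWithin_le_nhds
            exact tendsto_nhdsWithin_of_tendsto_nhds_of_eventually_within _ h1
              (by filter_upwards [self_mem_nhdsWithin] with t ht
                  exact mul_pos ht hu0)
          have hinner : Tendsto (fun s : ℝ => (c - α s) * Real.log s) (𝓝[>] 0) (𝓝 0) := by
            have hsq : Tendsto (fun s : ℝ => Real.log s * s ^ (1:ℝ)) (𝓝[>] (0:ℝ)) (𝓝 0) :=
              tendsto_log_mul_rpow_nhdsGT_zero one_pos
            have hsq2 : Tendsto (fun s : ℝ => L * ‖Real.log s * s ^ (1:ℝ)‖) (𝓝[>] (0:ℝ)) (𝓝 0) := by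
              have := (hsq.norm).const_mul L
              simpa using this
            apply squeeze_zero_norm' ?_ hsq2
            filter_upwards [hIoo] with s hs
            rw [Real.rpow_one, Real.norm_eq_abs, Real.norm_eq_abs, abs_mul, abs_mul,
              abs_of_pos hs.1]
            have h4 : |c - α s| ≤ L * s := by
              rw [abs_sub_comm]; exact habs s ⟨hs.1.le, hs.2.le⟩
            nlinarith [abs_nonneg (Real.log s), mul_le_mul_of_nonneg_right h4
              (abs_nonneg (Real.log s))]
          have hφtend : Tendsto (fun t : ℝ => φ (t*u)) (𝓝[>] (0:ℝ)) (𝓝 1) := by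
            have h5 := (Real.continuous_exp.tendsto 0).comp (hinner.comp htu)
            rw [Real.exp_zero] at h5
            exact h5
          have h6 := hφtend.const_mul (u ^ (-c) * (1-u) ^ (c-1))
          simpa using h6
    have hβval : (∫ u in (0:ℝ)..1, u ^ (-c) * (1-u) ^ (c-1)) = κ := by
      rw [Stmt0Aux.beta_value hc0 hc1, hκdef]
      ring
    have h2 := hlim.div_const κ
    rw [hβval, div_self hκ.ne'] at h2
    apply Tendsto.congr' ?_ h2
    filter_upwards [self_mem_nhdsWithin] with t ht
    exact (key t ht).symm
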